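/- There exists a computable function B : List Bool → Bool such that: (1) for every computable γ : ℕ → Bool there exists n with B (γ↾n) = true; and (2) for every m there exists γ : ℕ → Bool with B (γ↾n) = false for all n ≤ m. In words: there is a decidable bar on the computable points of Cantor space no finite truncation of which bars Cantor space (Kleene's Alternative holds in the computable model; content of Theorem 2.1, BIM + CT ⊢ KA). -/

import Mathlib

open Nat.Partrec (Code)
open Nat.Partrec.Code

/-- The first `n` values of `γ` as a list. -/
def seg (γ : ℕ → Bool) (n : ℕ) : List Bool := List.ofFn fun i : Fin n => γ i

def kaG (s : List Bool) (e : ℕ) : Bool :=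
  ((evaln s.length (Denumerable.ofNat Code e) e).map
    (fun v => s.getD e false == decide (v = 1))).getD false

def kaB (s : List Bool) : Bool := (List.range s.length).any (kaG s)

theorem kaG_prim : Primrec₂ kaG := by
  have h1 : Primrec fun p : List Bool × ℕ =>
      evaln p.1.length (Denumerable.ofNat Code p.2) p.2 :=
    primrec_evaln.comp <| Primrec.pair
      (Primrec.pair (Primrec.list_length.comp Primrec.fst)
        ((Primrec.ofNat Code).comp Primrec.snd)) Primrec.snd
  have h2 : Primrec₂ fun (p : List Bool × ℕ) (v : ℕ) =>
      p.1.getD p.2 false == decide (v = 1) :=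
    Primrec.beq.comp
      ((Primrec.list_getD false).comp (Primrec.fst.comp Primrec.fst)
        (Primrec.snd.comp Primrec.fst))
      (Primrec.eq.decide.comp Primrec.snd (Primrec.const 1))
  exact Primrec.option_getD.comp (Primrec.option_map h1 h2) (Primrec.const false)

theorem kaB_prim : Primrec kaB := by
  have key : ∀ (p : ℕ → Bool) (l : List ℕ),
      (l.map p).foldr (· || ·) false = l.any p := by
    intro p l; induction l with
    | nil => rfl
    | cons a l ih => simp [List.any_cons, ← ih]
  have hOr : Primrec₂ (fun (_ : List Bool) (p : Bool × Bool) => p.1 || p.2) :=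
    Primrec₂.comp Primrec.or (Primrec.fst.comp Primrec.snd)
      (Primrec.snd.comp Primrec.snd)
  have : Primrec fun s : List Bool =>
      (((List.range s.length).map (kaG s)).foldr (fun b r => b || r) false) :=
    Primrec.list_foldr (Primrec.list_map (Primrec.list_range.comp Primrec.list_length)
        kaG_prim) (Primrec.const false) hOr
  exact this.of_eq fun s => key _ _

theorem kaB_iff (s : List Bool) : kaB s = true ↔
    ∃ e < s.length, ∃ v, evaln s.length (Denumerable.ofNat Code e) e = some v ∧
      s.getD e false = decide (v = 1) := by
  unfold kaB
  rw [List.any_eq_true]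
  constructor
  · rintro ⟨e, he, hg⟩
    rw [List.mem_range] at he
    refine ⟨e, he, ?_⟩
    unfold kaG at hg
    cases h : evaln s.length (Denumerable.ofNat Code e) e with
    | none => rw [h] at hg; simp at hg
    | some v =>
      rw [h] at hg; simp only [Option.map_some, Option.getD_some, beq_iff_eq] at hg
      exact ⟨v, rfl, hg⟩
  · rintro ⟨e, he, v, hv, hs⟩
    refine ⟨e, List.mem_range.2 he, ?_⟩
    unfold kaG
    rw [hv]
    simp [← List.getD_eq_getElem?_getD, hs]

theorem seg_length (γ : ℕ → Bool) (n : ℕ) : (seg γ n).length = n := by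
  simp [seg]

theorem seg_getD (γ : ℕ → Bool) {n e : ℕ} (h : e < n) :
    (seg γ n).getD e false = γ e := by
  rw [List.getD_eq_getElem?_getD]
  simp [seg, List.getElem?_ofFn, h]

theorem encode_bool (b : Bool) : Encodable.encode b = if b then 1 else 0 := by
  cases b <;> rfl

/-- Kleene's Alternative holds in the computable model (Theorem 2.1, BIM + CT ⊢ KA):
there is a computable decidable bar on the computable points of Cantor space
no finite truncation of which bars Cantor space. -/
theorem kleene_alternative_computable :
    ∃ B : List Bool → Bool, Computable B ∧
      (∀ γ : ℕ → Bool, Computable γ → ∃ n, B (seg γ n) = true) ∧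
      (∀ m : ℕ, ∃ γ : ℕ → Bool, ∀ n ≤ m, B (seg γ n) = false) := by
  refine ⟨kaB, kaB_prim.to_comp, ?_, ?_⟩
  · intro γ hγ
    have hpart : Nat.Partrec fun n => Part.some (Encodable.encode (γ n)) := by
      have : Computable fun n => Encodable.encode (γ n) := Computable.encode.comp hγ
      exact Partrec.nat_iff.1 this
    obtain ⟨c, hc⟩ := exists_code.1 hpart
    set e := Encodable.encode c with he
    have hofNat : Denumerable.ofNat Code e = c := Denumerable.ofNat_encode c
    have hmem : Encodable.encode (γ e) ∈ eval c e := by rw [hc]; simp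
    obtain ⟨k, hk⟩ := evaln_complete.1 hmem
    refine ⟨max (e + 1) k, ?_⟩
    rw [kaB_iff]
    refine ⟨e, ?_, Encodable.encode (γ e), ?_, ?_⟩
    · rw [seg_length]; exact lt_of_lt_of_le (Nat.lt_succ_self e) (le_max_left _ _)
    · rw [seg_length, hofNat]
      exact evaln_mono (le_max_right _ _) hk
    · rw [seg_getD γ (lt_of_lt_of_le (Nat.lt_succ_self e) (le_max_left _ _))]
      rw [encode_bool]; cases γ e <;> simp
  · intro m
    refine ⟨fun e => ((evaln m (Denumerable.ofNat Code e) e).map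
      (fun v => !decide (v = 1))).getD false, ?_⟩
    intro n hn
    by_contra hB
    rw [Bool.not_eq_false, kaB_iff] at hB
    obtain ⟨e, he, v, hv, hs⟩ := hB
    rw [seg_length] at he hv
    rw [seg_getD _ he] at hs
    have hvm : evaln m (Denumerable.ofNat Code e) e = some v :=
      evaln_mono hn hv
    rw [hvm] at hs
    simp only [Option.map_some, Option.getD_some] at hs
    cases hd : decide (v = 1) <;> rw [hd] at hs <;> simp at hs
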